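/- arXiv:2605.02670 — 4 statements merged into one kernel-verified Lean document; each statement's English description precedes it below -/
import Mathlib

section
/- For every real number λ > 0 and every β ∈ (0,1), the Balakrishnan integral identity holds: (sin(πβ)/π) · ∫₀^∞ s^(−β) · (λ + s)^(−1) ds = λ^(−β), where s^(−β) and λ^(−β) denote real powers. -/
open Real MeasureTheory

open Set in
lemma beta_ioo (β : ℝ) (hβ0 : 0 < β) (hβ1 : β < 1) :
    ∫ x in Set.Ioo (0:ℝ) 1, x ^ (-β) * (1 - x) ^ (β - 1) = π / Real.sin (π * β) := by
  have h1 : (0:ℝ) < 1 - β := by linarith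
  have hc : Complex.betaIntegral (1 - (β:ℂ)) β = ((π / Real.sin (π * β) : ℝ) : ℂ) := by
    have h := Complex.Gamma_mul_Gamma_eq_betaIntegral (s := (1:ℂ) - β) (t := (β:ℂ))
      (by simpa using h1) (by simpa using hβ0)
    rw [sub_add_cancel, Complex.Gamma_one, one_mul] at h
    rw [← h, mul_comm, Complex.Gamma_mul_Gamma_one_sub β]
    push_cast [Complex.ofReal_sin]
    ring_nf
  have hre : Complex.betaIntegral (1 - (β:ℂ)) β
      = ((∫ x in (0:ℝ)..1, x ^ (-β) * (1 - x) ^ (β - 1) : ℝ) : ℂ) := by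
    rw [Complex.betaIntegral, ← intervalIntegral.integral_ofReal]
    refine intervalIntegral.integral_congr fun x hx => ?_
    rw [Set.uIcc_of_le (by norm_num)] at hx
    have hx0 : (0:ℝ) ≤ x := hx.1
    have hx1 : (0:ℝ) ≤ 1 - x := by linarith [hx.2]
    push_cast
    rw [Complex.ofReal_cpow hx0, Complex.ofReal_cpow hx1]
    push_cast
    ring_nf
  have := hc.symm.trans hre
  have hr : π / Real.sin (π * β) = ∫ x in (0:ℝ)..1, x ^ (-β) * (1 - x) ^ (β - 1) := by
    exact_mod_cast this
  rw [hr, intervalIntegral.integral_of_le (by norm_num),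
    MeasureTheory.integral_Ioc_eq_integral_Ioo]

open Set in
lemma key_integral (β : ℝ) (hβ0 : 0 < β) (hβ1 : β < 1) :
    ∫ s in Set.Ioi (0:ℝ), s ^ (-β) * (1 + s)⁻¹ = π / Real.sin (π * β) := by
  have himg : (fun x : ℝ => x / (1 - x)) '' Ioo 0 1 = Ioi (0:ℝ) := by
    ext u
    constructor
    · rintro ⟨x, hx, rfl⟩
      exact div_pos hx.1 (by linarith [hx.2])
    · intro hu
      rw [Set.mem_Ioi] at hu
      refine ⟨u / (1 + u), ⟨div_pos hu (by linarith), ?_⟩, ?_⟩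
      · rw [div_lt_one (by linarith)]; linarith
      · have h1u : (1:ℝ) + u ≠ 0 := by positivity
        field_simp
        ring
  have hderiv : ∀ x ∈ Ioo (0:ℝ) 1, HasDerivWithinAt (fun x : ℝ => x / (1 - x))
      (((1 - x) ^ 2)⁻¹) (Ioo 0 1) x := by
    intro x hx
    have hne : (1:ℝ) - x ≠ 0 := by have := hx.2; intro h; linarith [h]
    have : HasDerivAt (fun x : ℝ => x / (1 - x))
        ((1 * (1 - x) - x * (0 - 1)) / (1 - x) ^ 2) x :=
      (hasDerivAt_id x).div ((hasDerivAt_const x 1).sub (hasDerivAt_id x)) hne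
    rw [show ((1 - x) ^ 2)⁻¹ = (1 * (1 - x) - x * (0 - 1)) / (1 - x) ^ 2 by ring]
    exact this.hasDerivWithinAt
  have hinj : Set.InjOn (fun x : ℝ => x / (1 - x)) (Ioo 0 1) := by
    intro a ha b hb h
    have hna : (1:ℝ) - a ≠ 0 := by have := ha.2; intro hh; linarith
    have hnb : (1:ℝ) - b ≠ 0 := by have := hb.2; intro hh; linarith
    field_simp at h
    linarith
  have := MeasureTheory.integral_image_eq_integral_abs_deriv_smul measurableSet_Ioo
    hderiv hinj (fun u : ℝ => u ^ (-β) * (1 + u)⁻¹)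
  rw [himg] at this
  rw [this, ← beta_ioo β hβ0 hβ1]
  refine setIntegral_congr_fun measurableSet_Ioo fun x hx => ?_
  have hx0 : (0:ℝ) < x := hx.1
  have hx1 : (0:ℝ) < 1 - x := by linarith [hx.2]
  have h1 : (1:ℝ) + x / (1 - x) = (1 - x)⁻¹ := by field_simp; ring
  rw [smul_eq_mul, h1, div_rpow hx0.le hx1.le, inv_inv, abs_of_pos (by positivity),
    Real.rpow_neg hx1.le β, Real.rpow_sub hx1, Real.rpow_one]
  have hb : (0:ℝ) < (1 - x) ^ β := Real.rpow_pos_of_pos hx1 β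
  field_simp

theorem balakrishnan_integral_identity (lam β : ℝ) (hlam : 0 < lam)
    (hβ0 : 0 < β) (hβ1 : β < 1) :
    (Real.sin (Real.pi * β) / Real.pi) *
      ∫ s in Set.Ioi (0 : ℝ), s ^ (-β) * (lam + s)⁻¹ = lam ^ (-β) := by
  have hscale : ∫ s in Set.Ioi (0:ℝ), s ^ (-β) * (lam + s)⁻¹
      = lam ^ (-β) * ∫ u in Set.Ioi (0:ℝ), u ^ (-β) * (1 + u)⁻¹ := by
    have h := MeasureTheory.integral_comp_mul_left_Ioi
      (fun s : ℝ => s ^ (-β) * (lam + s)⁻¹) 0 hlam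
    rw [mul_zero, smul_eq_mul] at h
    have h2 : ∫ x in Set.Ioi (0:ℝ), (lam * x) ^ (-β) * (lam + lam * x)⁻¹
        = lam ^ (-β) * lam⁻¹ * ∫ u in Set.Ioi (0:ℝ), u ^ (-β) * (1 + u)⁻¹ := by
      rw [← MeasureTheory.integral_const_mul]
      refine setIntegral_congr_fun measurableSet_Ioi fun x hx => ?_
      rw [Set.mem_Ioi] at hx
      rw [Real.mul_rpow hlam.le hx.le]
      have : lam + lam * x = lam * (1 + x) := by ring
      rw [this, mul_inv]
      ring
    rw [h2] at h
    have hl : lam ≠ 0 := hlam.ne'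
    field_simp at h ⊢
    linarith [h]
  rw [hscale, key_integral β hβ0 hβ1]
  have hsin : Real.sin (Real.pi * β) ≠ 0 := by
    refine ne_of_gt (Real.sin_pos_of_pos_of_lt_pi ?_ ?_)
    · positivity
    · nlinarith [Real.pi_pos]
  field_simp
end

section
/- For every real number λ > 0 and every β ∈ (0,1), the log-substituted Balakrishnan representation holds: λ^(−β) = (sin(πβ)/π) · ∫_ℝ e^((1−β)·y) · (λ + e^y)^(−1) dy. -/
open Real MeasureTheory

/-- The real Beta integral in the reflection case. -/
lemma real_beta_reflection {β : ℝ} (hβ0 : 0 < β) (hβ1 : β < 1) :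
    ∫ x in (0:ℝ)..1, x ^ (-β) * (1 - x) ^ (β - 1) = Real.pi / Real.sin (Real.pi * β) := by
  have h1 : (0:ℝ) < 1 - β := by linarith
  have hc : Complex.Gamma (1 - β) * Complex.Gamma β =
      Complex.Gamma ((1 - β) + β) * Complex.betaIntegral (1 - β) β :=
    Complex.Gamma_mul_Gamma_eq_betaIntegral (by simpa using h1) (by simpa using hβ0)
  have hsum : ((1 - β : ℂ)) + β = 1 := by ring
  rw [hsum, Complex.Gamma_one, one_mul] at hc
  have hbeta : Complex.betaIntegral (1 - β) β =
      ((∫ x in (0:ℝ)..1, x ^ (-β) * (1 - x) ^ (β - 1) : ℝ) : ℂ) := by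
    rw [Complex.betaIntegral, ← intervalIntegral.integral_ofReal]
    refine intervalIntegral.integral_congr fun x hx => ?_
    rw [Set.uIcc_of_le (by norm_num : (0:ℝ) ≤ 1)] at hx
    have hx0 : (0:ℝ) ≤ x := hx.1
    have hx1 : (0:ℝ) ≤ 1 - x := by linarith [hx.2]
    rw [show (1 - (β:ℂ) - 1) = ((-β : ℝ):ℂ) by push_cast; ring,
      show ((β:ℂ) - 1) = ((β - 1 : ℝ):ℂ) by push_cast; ring,
      show (1 - (x:ℂ)) = ((1 - x : ℝ):ℂ) by push_cast; ring,
      ← Complex.ofReal_cpow hx0, ← Complex.ofReal_cpow hx1, ← Complex.ofReal_mul]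
  rw [hbeta] at hc
  have hG1 : Complex.Gamma ((1 - β : ℝ) : ℂ) = ((Real.Gamma (1 - β) : ℝ) : ℂ) :=
    Complex.Gamma_ofReal (1 - β)
  have hG2 : Complex.Gamma ((β : ℝ) : ℂ) = ((Real.Gamma β : ℝ) : ℂ) :=
    Complex.Gamma_ofReal β
  have hcast : ((1 : ℂ) - (β:ℝ)) = (((1 - β : ℝ)) : ℂ) := by push_cast; ring
  rw [hcast, hG1, hG2, ← Complex.ofReal_mul] at hc
  have hre : Real.Gamma (1 - β) * Real.Gamma β
      = ∫ x in (0:ℝ)..1, x ^ (-β) * (1 - x) ^ (β - 1) := by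
    exact_mod_cast hc
  rw [← hre, mul_comm, Real.Gamma_mul_Gamma_one_sub]

theorem balakrishnan_log_representation (lam β : ℝ) (hlam : 0 < lam)
    (hβ0 : 0 < β) (hβ1 : β < 1) :
    lam ^ (-β) = (Real.sin (Real.pi * β) / Real.pi) *
      ∫ y : ℝ, Real.exp ((1 - β) * y) * (lam + Real.exp y)⁻¹ := by
  set g : ℝ → ℝ := fun u => Real.log (lam * u / (1 - u)) with hg
  set g' : ℝ → ℝ := fun u => (u * (1 - u))⁻¹ with hg'
  set s : Set ℝ := Set.Ioo 0 1 with hs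
  set F : ℝ → ℝ := fun y => Real.exp ((1 - β) * y) * (lam + Real.exp y)⁻¹ with hF
  have hinner : ∀ u ∈ s, 0 < lam * u / (1 - u) := by
    intro u hu
    exact div_pos (mul_pos hlam hu.1) (by linarith [hu.2])
  have hderiv : ∀ u ∈ s, HasDerivWithinAt g (g' u) s u := by
    intro u hu
    have hu1 : (1 : ℝ) - u ≠ 0 := by have := hu.2; intro h; linarith
    have h1 : HasDerivAt (fun u : ℝ => lam * u) lam u := by
      simpa using (hasDerivAt_id u).const_mul lam
    have h2 : HasDerivAt (fun u : ℝ => 1 - u) (-1) u := by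
      simpa using (hasDerivAt_id u).const_sub 1
    have h3 : HasDerivAt (fun u : ℝ => lam * u / (1 - u))
        ((lam * (1 - u) - lam * u * (-1)) / (1 - u) ^ 2) u := h1.div h2 hu1
    have h4 := h3.log (ne_of_gt (hinner u hu))
    have heq : (lam * (1 - u) - lam * u * (-1)) / (1 - u) ^ 2 / (lam * u / (1 - u))
        = (u * (1 - u))⁻¹ := by
      have hu0 : u ≠ 0 := ne_of_gt hu.1
      field_simp
      ring
    rw [heq] at h4
    exact h4.hasDerivWithinAt
  have hexp_g : ∀ u ∈ s, Real.exp (g u) = lam * u / (1 - u) := fun u hu =>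
    Real.exp_log (hinner u hu)
  have himg : g '' s = Set.univ := by
    apply Set.eq_univ_of_forall
    intro y
    have hpos : (0:ℝ) < lam + Real.exp y := by positivity
    refine ⟨Real.exp y / (lam + Real.exp y), ⟨?_, ?_⟩, ?_⟩
    · exact div_pos (Real.exp_pos y) hpos
    · rw [div_lt_one hpos]; linarith [Real.exp_pos y]
    · show Real.log _ = y
      have h1 : 1 - Real.exp y / (lam + Real.exp y) = lam / (lam + Real.exp y) := by
        field_simp
        ring
      rw [h1]
      have h2 : lam * (Real.exp y / (lam + Real.exp y)) / (lam / (lam + Real.exp y))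
          = Real.exp y := by
        rw [mul_div_assoc', div_div_div_eq]
        field_simp
      rw [h2, Real.log_exp]
  have hinj : Set.InjOn g s := by
    have hli : Set.LeftInvOn (fun y => Real.exp y / (lam + Real.exp y)) g s := by
      intro u hu
      have hu0 : (0:ℝ) < u := hu.1
      have hu1 : (0:ℝ) < 1 - u := by linarith [hu.2]
      simp only
      rw [hexp_g u hu]
      have hden : lam + lam * u / (1 - u) = lam / (1 - u) := by
        field_simp; ring
      rw [hden, div_div_div_eq]
      field_simp
    exact hli.injOn
  have hcov : (∫ y : ℝ, F y) = ∫ u in s, |g' u| • F (g u) := by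
    rw [← MeasureTheory.setIntegral_univ, ← himg]
    exact integral_image_eq_integral_abs_deriv_smul measurableSet_Ioo hderiv hinj F
  have hintegrand : ∀ u ∈ s, |g' u| • F (g u)
      = lam ^ (-β) * (u ^ (-β) * (1 - u) ^ (β - 1)) := by
    intro u hu
    have hu0 : (0:ℝ) < u := hu.1
    have hu1 : (0:ℝ) < 1 - u := by linarith [hu.2]
    have habs : |g' u| = (u * (1 - u))⁻¹ := by
      rw [hg']
      exact abs_of_pos (by positivity)
    have hexp2 : Real.exp ((1 - β) * g u) = (lam * u / (1 - u)) ^ (1 - β) := by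
      rw [hg, Real.rpow_def_of_pos (hinner u hu), mul_comm]
    have hden : lam + Real.exp (g u) = lam / (1 - u) := by
      rw [hexp_g u hu]; field_simp; ring
    rw [smul_eq_mul, habs, hF]
    simp only
    rw [hexp2, hden]
    rw [Real.div_rpow (by positivity) hu1.le, Real.mul_rpow hlam.le hu0.le]
    have hl : lam ^ (1 - β) = lam * lam ^ (-β) := by
      rw [show (1:ℝ) - β = 1 + (-β) by ring, Real.rpow_add hlam, Real.rpow_one]
    have hu' : u ^ (1 - β) = u * u ^ (-β) := by
      rw [show (1:ℝ) - β = 1 + (-β) by ring, Real.rpow_add hu0, Real.rpow_one]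
    have hC : (1 - u) ^ (β - 1) = ((1 - u) ^ ((1:ℝ) - β))⁻¹ := by
      rw [← Real.rpow_neg hu1.le]
      norm_num
    rw [hl, hu', hC]
    have hCpos : (0:ℝ) < (1 - u) ^ ((1:ℝ) - β) := Real.rpow_pos_of_pos hu1 _
    field_simp
  have hmain : (∫ y : ℝ, F y)
      = lam ^ (-β) * ∫ u in (0:ℝ)..1, u ^ (-β) * (1 - u) ^ (β - 1) := by
    rw [hcov, MeasureTheory.setIntegral_congr_fun measurableSet_Ioo hintegrand,
      MeasureTheory.integral_const_mul, intervalIntegral.integral_of_le (by norm_num : (0:ℝ) ≤ 1),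
      MeasureTheory.integral_Ioc_eq_integral_Ioo]
  have hsin : 0 < Real.sin (Real.pi * β) := by
    apply Real.sin_pos_of_pos_of_lt_pi (mul_pos Real.pi_pos hβ0)
    calc Real.pi * β < Real.pi * 1 := by
          exact mul_lt_mul_of_pos_left hβ1 Real.pi_pos
      _ = Real.pi := mul_one _
  rw [hmain, real_beta_reflection hβ0 hβ1]
  field_simp
  ring_nf
  rw [mul_inv_cancel₀ (by rw [mul_comm]; exact hsin.ne')]
end

section
/- Let A be a real symmetric positive definite n × n matrix with spectral decomposition A = U D Uᵀ, where U is an orthogonal matrix and D is the diagonal matrix of (positive) eigenvalues λ₁, …, λₙ. Then for every β ∈ (0,1), the entrywise Bochner integral (sin(πβ)/π) · ∫₀^∞ s^(−β) · (A + s·I)^(−1) ds equals U D^(−β) Uᵀ, where D^(−β) is the diagonal matrix with entries λᵢ^(−β); that is, the Balakrishnan integral computes the negative fractional power A^(−β) of A. -/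
open Real MeasureTheory Matrix
open Set

lemma betaFun_complex_eq (β : ℝ) (hβ0 : 0 < β) (hβ1 : β < 1) :
    ∀ x ∈ Ioo (0:ℝ) 1, ((x:ℂ) ^ ((1 - (β:ℂ)) - 1) * (1 - (x:ℂ)) ^ ((β:ℂ) - 1))
      = ((x ^ (-β) * (1-x) ^ (β-1) : ℝ) : ℂ) := by
  intro x hx
  have hx0 : (0:ℝ) ≤ x := hx.1.le
  have hx1 : (0:ℝ) ≤ 1 - x := by linarith [hx.2]
  rw [Complex.ofReal_mul, Complex.ofReal_cpow hx0, Complex.ofReal_cpow hx1]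
  push_cast
  ring_nf

lemma betaReal_integrableOn (β : ℝ) (hβ0 : 0 < β) (hβ1 : β < 1) :
    IntegrableOn (fun x : ℝ => x ^ (-β) * (1-x) ^ (β-1)) (Ioo 0 1) := by
  have h := (Complex.betaIntegral_convergent (u := 1 - (β:ℂ)) (v := (β:ℂ))
    (by simp; linarith) (by simpa using hβ0)).1
  replace h := h.mono_set Ioo_subset_Ioc_self
  have h2 : IntegrableOn (fun x : ℝ => ((x ^ (-β) * (1-x) ^ (β-1) : ℝ) : ℂ)) (Ioo 0 1) := by
    refine h.congr_fun ?_ measurableSet_Ioo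
    intro x hx
    exact (betaFun_complex_eq β hβ0 hβ1 x hx)
  simpa [IntegrableOn] using h2.re

lemma betaReal_integral (β : ℝ) (hβ0 : 0 < β) (hβ1 : β < 1) :
    ∫ x in Ioo (0:ℝ) 1, x ^ (-β) * (1-x) ^ (β-1) = π / Real.sin (π * β) := by
  have hβc : 0 < ((β:ℂ)).re := by simpa using hβ0
  have h1βc : 0 < ((1 - (β:ℂ))).re := by simp; linarith
  have key := Complex.Gamma_mul_Gamma_eq_betaIntegral h1βc hβc
  rw [sub_add_cancel, Complex.Gamma_one, one_mul] at key
  have hbi : Complex.betaIntegral (1 - (β:ℂ)) (β:ℂ)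
      = ((∫ x in Ioo (0:ℝ) 1, x ^ (-β) * (1-x) ^ (β-1) : ℝ) : ℂ) := by
    rw [Complex.betaIntegral, intervalIntegral.integral_of_le zero_le_one,
      MeasureTheory.integral_Ioc_eq_integral_Ioo]
    rw [setIntegral_congr_fun measurableSet_Ioo
      (fun x hx => betaFun_complex_eq β hβ0 hβ1 x hx)]
    exact integral_ofReal
  rw [hbi] at key
  have key2 : Complex.Gamma (1 - (β:ℂ)) * Complex.Gamma (β:ℂ)
      = ((π / Real.sin (π * β) : ℝ) : ℂ) := by
    rw [mul_comm]
    have := Complex.Gamma_mul_Gamma_one_sub (β:ℂ)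
    rw [this]
    push_cast
    rfl
  rw [key2] at key
  exact_mod_cast key.symm

section Subst
variable {lam β : ℝ}

lemma subst_deriv (hlam : 0 < lam) :
    ∀ x ∈ Ioo (0:ℝ) 1, HasDerivWithinAt (fun x => lam * x / (1 - x))
      (lam / (1-x)^2) (Ioo 0 1) x := by
  intro x hx
  have hne : (1 - x) ≠ 0 := by have := hx.2; intro h; linarith [sub_eq_zero.mp h]
  have h1 : HasDerivAt (fun x : ℝ => lam * x) lam x := by
    simpa using (hasDerivAt_id x).const_mul lam
  have h2 : HasDerivAt (fun x : ℝ => 1 - x) (-1) x := by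
    simpa using (hasDerivAt_id x).const_sub 1
  have := h1.div h2 hne
  refine (this.congr_deriv ?_).hasDerivWithinAt
  field_simp
  ring

lemma subst_inj (hlam : 0 < lam) :
    InjOn (fun x => lam * x / (1 - x)) (Ioo (0:ℝ) 1) := by
  intro x hx y hy h
  have hxn : (1 - x) ≠ 0 := by have := hx.2; intro hc; linarith [sub_eq_zero.mp hc]
  have hyn : (1 - y) ≠ 0 := by have := hy.2; intro hc; linarith [sub_eq_zero.mp hc]
  field_simp at h
  have : lam * (x - y) = 0 := by ring_nf; nlinarith [h]
  have := mul_eq_zero.mp this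
  rcases this with h' | h'
  · exact absurd h' hlam.ne'
  · linarith [sub_eq_zero.mp h']

lemma subst_image (hlam : 0 < lam) :
    (fun x => lam * x / (1 - x)) '' Ioo (0:ℝ) 1 = Ioi 0 := by
  ext t
  constructor
  · rintro ⟨x, hx, rfl⟩
    have h1 : 0 < 1 - x := by linarith [hx.2]
    exact div_pos (mul_pos hlam hx.1) h1
  · intro ht
    have ht' : (0:ℝ) < t := ht
    refine ⟨t / (lam + t), ⟨div_pos ht' (by linarith), ?_⟩, ?_⟩
    · rw [div_lt_one (by linarith)]; linarith
    · have h1 : lam + t ≠ 0 := by positivity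
      field_simp
      rw [add_sub_cancel_right, div_self hlam.ne']

lemma subst_pointwise (hlam : 0 < lam) (hβ0 : 0 < β) (hβ1 : β < 1) :
    ∀ x ∈ Ioo (0:ℝ) 1,
      |lam / (1-x)^2| • ((lam * x / (1 - x)) ^ (-β) * (lam + lam * x / (1 - x))⁻¹)
        = lam ^ (-β) * (x ^ (-β) * (1-x) ^ (β-1)) := by
  intro x hx
  have hx0 : 0 < x := hx.1
  have h1 : 0 < 1 - x := by linarith [hx.2]
  have hfx : lam * x / (1 - x) = lam * x * (1-x)⁻¹ := by ring
  have hsum : lam + lam * x / (1 - x) = lam / (1-x) := by field_simp; ring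
  rw [hsum, hfx, smul_eq_mul, abs_of_pos (by positivity)]
  rw [Real.mul_rpow (by positivity) (by positivity),
      Real.mul_rpow hlam.le hx0.le, Real.inv_rpow h1.le, ← Real.rpow_neg h1.le,
      neg_neg, Real.rpow_sub h1, Real.rpow_one]
  field_simp
end Subst

lemma scalar_integrable {lam β : ℝ} (hlam : 0 < lam) (hβ0 : 0 < β) (hβ1 : β < 1) :
    IntegrableOn (fun s : ℝ => s ^ (-β) * (lam + s)⁻¹) (Ioi 0) := by
  rw [← subst_image hlam,
    integrableOn_image_iff_integrableOn_abs_deriv_smul measurableSet_Ioo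
      (subst_deriv hlam) (subst_inj hlam)]
  have hi : IntegrableOn (fun x : ℝ => lam ^ (-β) * (x ^ (-β) * (1-x) ^ (β-1)))
      (Ioo 0 1) := (betaReal_integrableOn β hβ0 hβ1).const_mul _
  refine hi.congr_fun ?_ measurableSet_Ioo
  intro x hx
  exact (subst_pointwise hlam hβ0 hβ1 x hx).symm

lemma scalar_integral {lam β : ℝ} (hlam : 0 < lam) (hβ0 : 0 < β) (hβ1 : β < 1) :
    ∫ s in Ioi (0:ℝ), s ^ (-β) * (lam + s)⁻¹
      = lam ^ (-β) * (π / Real.sin (π * β)) := by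
  rw [← subst_image hlam,
    integral_image_eq_integral_abs_deriv_smul measurableSet_Ioo
      (subst_deriv hlam) (subst_inj hlam)]
  rw [setIntegral_congr_fun measurableSet_Ioo (subst_pointwise hlam hβ0 hβ1)]
  rw [integral_const_mul, betaReal_integral β hβ0 hβ1]

lemma conj_diag_inv {n : ℕ} (U : Matrix (Fin n) (Fin n) ℝ)
    (hU : U * Uᵀ = 1) (hUt : Uᵀ * U = 1) (d : Fin n → ℝ) (hd : ∀ k, d k ≠ 0) :
    (U * Matrix.diagonal d * Uᵀ)⁻¹ = U * Matrix.diagonal (fun k => (d k)⁻¹) * Uᵀ := by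
  apply Matrix.inv_eq_right_inv
  calc (U * Matrix.diagonal d * Uᵀ) * (U * Matrix.diagonal (fun k => (d k)⁻¹) * Uᵀ)
      = U * Matrix.diagonal d * (Uᵀ * U) * Matrix.diagonal (fun k => (d k)⁻¹) * Uᵀ := by
        simp only [Matrix.mul_assoc]
    _ = U * (Matrix.diagonal d * Matrix.diagonal (fun k => (d k)⁻¹)) * Uᵀ := by
        rw [hUt]; simp only [Matrix.mul_assoc, Matrix.one_mul]
    _ = 1 := by
        rw [Matrix.diagonal_mul_diagonal]
        have : (fun k => d k * (d k)⁻¹) = fun _ => (1:ℝ) := by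
          funext k; exact mul_inv_cancel₀ (hd k)
        rw [this, Matrix.diagonal_one, Matrix.mul_one, hU]

lemma shift_decomp {n : ℕ} (A U : Matrix (Fin n) (Fin n) ℝ) (lam : Fin n → ℝ)
    (hU : U * Uᵀ = 1) (hdecomp : A = U * Matrix.diagonal lam * Uᵀ) (s : ℝ) :
    A + s • (1 : Matrix (Fin n) (Fin n) ℝ)
      = U * Matrix.diagonal (fun k => lam k + s) * Uᵀ := by
  have h1 : s • (1 : Matrix (Fin n) (Fin n) ℝ)
      = U * Matrix.diagonal (fun _ => s) * Uᵀ := by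
    have : Matrix.diagonal (fun _ : Fin n => s) = s • (1 : Matrix (Fin n) (Fin n) ℝ) := by
      rw [← Matrix.diagonal_one, ← Matrix.diagonal_smul]
      simp [Pi.smul_def]
    rw [this, Matrix.mul_smul, Matrix.smul_mul, Matrix.mul_one, hU]
  rw [hdecomp, h1, ← Matrix.add_mul, ← Matrix.mul_add, ← Matrix.diagonal_add]

lemma conj_diag_apply {n : ℕ} (U : Matrix (Fin n) (Fin n) ℝ) (d : Fin n → ℝ) (i j : Fin n) :
    (U * Matrix.diagonal d * Uᵀ) i j = ∑ k, U i k * d k * U j k := by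
  rw [Matrix.mul_apply]
  simp only [Matrix.mul_diagonal, Matrix.transpose_apply]

theorem balakrishnan_matrix_fractional_power (n : ℕ)
    (A U : Matrix (Fin n) (Fin n) ℝ) (lam : Fin n → ℝ)
    (hA : A.PosDef) (hAsym : Aᵀ = A)
    (hU : U * Uᵀ = 1) (hUt : Uᵀ * U = 1)
    (hlam : ∀ i, 0 < lam i)
    (hdecomp : A = U * Matrix.diagonal lam * Uᵀ)
    (β : ℝ) (hβ0 : 0 < β) (hβ1 : β < 1) :
    ∀ i j : Fin n,
      (Real.sin (Real.pi * β) / Real.pi) *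
        ∫ s in Set.Ioi (0 : ℝ),
          s ^ (-β) * ((A + s • (1 : Matrix (Fin n) (Fin n) ℝ))⁻¹ i j) =
      (U * Matrix.diagonal (fun i => lam i ^ (-β)) * Uᵀ) i j := by
  intro i j
  have hsin : 0 < Real.sin (π * β) :=
    Real.sin_pos_of_pos_of_lt_pi (by positivity) (by nlinarith [Real.pi_pos])
  have hstep : ∀ s ∈ Ioi (0:ℝ),
      s ^ (-β) * ((A + s • (1 : Matrix (Fin n) (Fin n) ℝ))⁻¹ i j)
        = ∑ k, (U i k * U j k) * (s ^ (-β) * (lam k + s)⁻¹) := by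
    intro s hs
    have hs0 : (0:ℝ) < s := hs
    rw [shift_decomp A U lam hU hdecomp s,
        conj_diag_inv U hU hUt _ (fun k => by have := hlam k; positivity),
        conj_diag_apply, Finset.mul_sum]
    exact Finset.sum_congr rfl fun k _ => by ring
  rw [setIntegral_congr_fun measurableSet_Ioi hstep,
      integral_finset_sum _
        (fun k _ => (scalar_integrable (hlam k) hβ0 hβ1).const_mul _),
      conj_diag_apply, Finset.mul_sum]
  refine Finset.sum_congr rfl fun k _ => ?_
  rw [integral_const_mul, scalar_integral (hlam k) hβ0 hβ1]
  field_simp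
end

section
/- Let A be the n × n real tridiagonal matrix with main diagonal d₁, …, dₙ, subdiagonal l₁, …, lₙ₋₁ and superdiagonal u₁, …, uₙ₋₁, and define the Thomas-algorithm coefficients by d′₁ = d₁, and for i ≥ 2, l′ᵢ = lᵢ₋₁ / d′ᵢ₋₁ and d′ᵢ = dᵢ − l′ᵢ · uᵢ₋₁, assuming all d′ᵢ are nonzero. Given a right-hand side vector b, define the forward substitution y₁ = b₁, yᵢ = bᵢ − l′ᵢ · yᵢ₋₁ for i ≥ 2, and the backward substitution wₙ = yₙ / d′ₙ, wᵢ = (yᵢ − uᵢ · wᵢ₊₁) / d′ᵢ for i ≤ n − 1. Then the resulting vector w solves the tridiagonal system: A w = b. -/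
open Matrix

theorem thomas_algorithm_solves (n : ℕ) (d l u d' l' b y w : ℕ → ℝ)
    (A : Matrix (Fin n) (Fin n) ℝ)
    (hdiag : ∀ i : Fin n, A i i = d i)
    (hsub : ∀ i j : Fin n, (i : ℕ) = (j : ℕ) + 1 → A i j = l j)
    (hsup : ∀ i j : Fin n, (j : ℕ) = (i : ℕ) + 1 → A i j = u i)
    (hzero : ∀ i j : Fin n, (i : ℕ) + 2 ≤ (j : ℕ) ∨ (j : ℕ) + 2 ≤ (i : ℕ) → A i j = 0)
    (hd'0 : d' 0 = d 0)
    (hl' : ∀ i : ℕ, i + 1 < n → l' (i + 1) = l i / d' i)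
    (hd' : ∀ i : ℕ, i + 1 < n → d' (i + 1) = d (i + 1) - l' (i + 1) * u i)
    (hne : ∀ i : ℕ, i < n → d' i ≠ 0)
    (hy0 : y 0 = b 0)
    (hy : ∀ i : ℕ, i + 1 < n → y (i + 1) = b (i + 1) - l' (i + 1) * y i)
    (hwlast : 0 < n → w (n - 1) = y (n - 1) / d' (n - 1))
    (hw : ∀ i : ℕ, i + 1 < n → w i = (y i - u i * w (i + 1)) / d' i) :
    A *ᵥ (fun i : Fin n => w i) = fun i : Fin n => b i := by
  have hDw : ∀ m : ℕ, m + 1 < n → d' m * w m + u m * w (m + 1) = y m := by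
    intro m hm
    have hd := hne m (by omega)
    rw [hw m hm]
    field_simp
    ring
  have hDlast : 0 < n → d' (n - 1) * w (n - 1) = y (n - 1) := by
    intro hn
    have hd := hne (n - 1) (by omega)
    rw [hwlast hn]
    field_simp
  have hlmul : ∀ m : ℕ, m + 1 < n → l m = l' (m + 1) * d' m := by
    intro m hm
    have hd := hne m (by omega)
    rw [hl' m hm]
    field_simp
  funext i
  obtain ⟨k, hk⟩ := i
  simp only [mulVec, dotProduct]
  set f : ℕ → ℝ := fun j => if h : j < n then A ⟨k, hk⟩ ⟨j, h⟩ * w j else 0 with hfdef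
  have hsum : ∑ j : Fin n, A ⟨k, hk⟩ j * w (j : ℕ) = ∑ j ∈ Finset.range n, f j := by
    rw [← Fin.sum_univ_eq_sum_range f]
    apply Finset.sum_congr rfl
    intro j _
    simp [hfdef, j.isLt]
  rw [hsum]
  have hfd : f k = d k * w k := by
    simp only [hfdef]
    rw [dif_pos hk, hdiag ⟨k, hk⟩]
  have hfu : k + 1 < n → f (k + 1) = u k * w (k + 1) := by
    intro h
    simp only [hfdef]
    rw [dif_pos h, hsup ⟨k, hk⟩ ⟨k + 1, h⟩ rfl]
  have hf0 : ∀ x, x < n → (k + 2 ≤ x ∨ x + 2 ≤ k) → f x = 0 := by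
    intro x hx hcond
    simp only [hfdef]
    rw [dif_pos hx, hzero ⟨k, hk⟩ ⟨x, hx⟩ hcond, zero_mul]
  show ∑ j ∈ Finset.range n, f j = b k
  rcases k with _ | m
  · -- row 0
    rcases Nat.lt_or_ge 1 n with hn2 | hn1
    · -- n ≥ 2
      have hset : ∑ j ∈ Finset.range n, f j = f 0 + f 1 := by
        rw [← Finset.sum_pair (show (0:ℕ) ≠ 1 by omega)]
        apply (Finset.sum_subset ?_ ?_).symm
        · intro x hx
          simp only [Finset.mem_insert, Finset.mem_singleton] at hx
          simp only [Finset.mem_range]; omega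
        · intro x hx hxn
          simp only [Finset.mem_range] at hx
          simp only [Finset.mem_insert, Finset.mem_singleton] at hxn
          exact hf0 x hx (by omega)
      rw [hset, hfd, hfu hn2, ← hd'0]
      rw [← hy0]
      exact hDw 0 hn2
    · -- n = 1
      have hn : n = 1 := by omega
      subst hn
      rw [Finset.sum_range_one, hfd, ← hd'0, ← hy0]
      exact hDlast (by omega)
  · -- row m + 1
    have hT : ∃ T, (∑ j ∈ Finset.range n, f j = f m + f (m + 1) + T) ∧
        d' (m + 1) * w (m + 1) + T = y (m + 1) := by
      rcases Nat.lt_or_ge (m + 2) n with h2 | h1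
      · refine ⟨u (m + 1) * w (m + 2), ?_, hDw (m + 1) h2⟩
        have hset : ∑ j ∈ Finset.range n, f j = f m + f (m + 1) + f (m + 2) := by
          have hne3 : ({m, m + 1, m + 2} : Finset ℕ) = insert m {m + 1, m + 2} := rfl
          have : ∑ j ∈ ({m, m + 1, m + 2} : Finset ℕ), f j = f m + (f (m + 1) + f (m + 2)) := by
            rw [hne3, Finset.sum_insert (by simp), Finset.sum_pair (by omega)]
          rw [← add_assoc] at this
          rw [← this]
          apply (Finset.sum_subset ?_ ?_).symm
          · intro x hx
            simp only [Finset.mem_insert, Finset.mem_singleton] at hx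
            simp only [Finset.mem_range]; omega
          · intro x hx hxn
            simp only [Finset.mem_range] at hx
            simp only [Finset.mem_insert, Finset.mem_singleton] at hxn
            exact hf0 x hx (by omega)
        rw [hset, hfu h2]
      · refine ⟨0, ?_, ?_⟩
        · have hset : ∑ j ∈ Finset.range n, f j = f m + f (m + 1) := by
            rw [← Finset.sum_pair (show m ≠ m + 1 by omega)]
            apply (Finset.sum_subset ?_ ?_).symm
            · intro x hx
              simp only [Finset.mem_insert, Finset.mem_singleton] at hx
              simp only [Finset.mem_range]; omega
            · intro x hx hxn
              simp only [Finset.mem_range] at hx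
              simp only [Finset.mem_insert, Finset.mem_singleton] at hxn
              exact hf0 x hx (by omega)
          rw [hset, add_zero]
        · have hn1 : n - 1 = m + 1 := by omega
          rw [add_zero, ← hn1]
          exact hDlast (by omega)
    obtain ⟨T, hsumT, hTy⟩ := hT
    have hfl : f m = l m * w m := by
      simp only [hfdef]
      rw [dif_pos (show m < n by omega), hsub ⟨m + 1, hk⟩ ⟨m, by omega⟩ rfl]
    rw [hsumT, hfl, hfd]
    have h1 : m + 1 < n := hk
    rw [hlmul m h1]
    linear_combination hTy + l' (m + 1) * hDw m h1 - w (m + 1) * hd' m h1 + hy m h1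
end
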